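/- Let Q be a probability measure on (0,∞), P_d = P_d(Q), and let K_d be the pCN transition kernel for target density p_d. Then for every p ∈ ℕ and every compact set K ⊂ (0,∞)∖{1}, d^p · ∫_{ℝ^d} 1{‖x‖²/d ∈ K} · K_d(x, ℝ^d∖{x}) P_d(dx) → 0 as d → ∞. (In terms of the stationary pCN chain {X_m^d}, this says d^p·ℙ(‖X_0^d‖²/d ∈ K and X_0^d ≠ X_1^d) → 0.) -/

import Mathlib

open MeasureTheory ENNReal Filter Topology

noncomputable section

/-- The state space in dimension `d`: `d`-dimensional Euclidean space. -/
abbrev Euc (d : ℕ) : Type := EuclideanSpace ℝ (Fin d)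

/-- The pCN proposal density: the density of `N_d(√ρ · x, (1-ρ) I_d)` at `y`. -/
def pcnPropDen (ρ : ℝ) (d : ℕ) (x y : Euc d) : ℝ :=
  (2 * Real.pi * (1 - ρ)) ^ (-(d : ℝ) / 2) *
    Real.exp (-‖y - Real.sqrt ρ • x‖ ^ 2 / (2 * (1 - ρ)))

/-- The pCN acceptance probability for target density `p`. -/
def pcnAccept (d : ℕ) (p : Euc d → ℝ) (x y : Euc d) : ℝ :=
  min 1 ((p y * Real.exp (-‖x‖ ^ 2 / 2)) / (p x * Real.exp (-‖y‖ ^ 2 / 2)))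

/-- The pCN transition kernel for target density `p`, as a measure-valued map. -/
def pcnKernel (ρ : ℝ) (d : ℕ) (p : Euc d → ℝ) (x : Euc d) : Measure (Euc d) :=
  volume.withDensity (fun y => ENNReal.ofReal (pcnAccept d p x y * pcnPropDen ρ d x y)) +
    (1 - ∫⁻ y, ENNReal.ofReal (pcnAccept d p x y * pcnPropDen ρ d x y)) • Measure.dirac x

/-- The density of the scale mixture of Gaussians `P_d(Q)`:
`p_d(x) = ∫₀^∞ (2πz)^{-d/2} exp(-‖x‖²/(2z)) Q(dz)`. -/
def mixDensity (Q : Measure ℝ) (d : ℕ) (x : Euc d) : ℝ :=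
  ∫ z in Set.Ioi (0 : ℝ), (2 * Real.pi * z) ^ (-(d : ℝ) / 2) * Real.exp (-‖x‖ ^ 2 / (2 * z)) ∂Q

/-- The scale mixture of Gaussians `P_d(Q)` on `ℝ^d` with mixing distribution `Q`. -/
def PdQ (Q : Measure ℝ) (d : ℕ) : Measure (Euc d) :=
  volume.withDensity fun x => ENNReal.ofReal (mixDensity Q d x)

/-- The density of `N_d(0, σ² I_d)`. -/
def gaussDensity (σ : ℝ) (d : ℕ) (x : Euc d) : ℝ :=
  (2 * Real.pi * σ ^ 2) ^ (-(d : ℝ) / 2) * Real.exp (-‖x‖ ^ 2 / (2 * σ ^ 2))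



open Real
open scoped RealInnerProductSpace

lemma ofReal_quad_eq {d : ℕ} (a c : ℝ) (w v : Euc d) :
    -(a:ℂ) * (‖v‖:ℂ)^2 + (c:ℂ) * (⟪w, v⟫:ℝ) = ((-a * ‖v‖^2 + c * ⟪w, v⟫ : ℝ) : ℂ) := by
  push_cast; ring

lemma integrable_rexp_quad {d : ℕ} {a : ℝ} (ha : 0 < a) (c : ℝ) (w : Euc d) :
    Integrable (fun v : Euc d => rexp (-a * ‖v‖^2 + c * ⟪w, v⟫)) := by
  have h := (GaussianFourier.integrable_cexp_neg_mul_sq_norm_add (V := Euc d)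
      (b := (a:ℂ)) (by simpa using ha) (c:ℂ) w).norm
  convert h using 2 with v
  rw [ofReal_quad_eq, ← Complex.ofReal_exp, Complex.norm_real, Real.norm_eq_abs,
    abs_of_pos (Real.exp_pos _)]

lemma integral_rexp_quad {d : ℕ} {a : ℝ} (ha : 0 < a) (c : ℝ) (w : Euc d) :
    ∫ v : Euc d, rexp (-a * ‖v‖^2 + c * ⟪w, v⟫)
      = (π / a) ^ ((d:ℝ) / 2) * rexp (c^2 * ‖w‖^2 / (4*a)) := by
  have h := GaussianFourier.integral_cexp_neg_mul_sq_norm_add (V := Euc d)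
      (b := (a:ℂ)) (by simpa using ha) (c:ℂ) w
  rw [← Complex.ofReal_inj]
  calc ((∫ v : Euc d, rexp (-a * ‖v‖^2 + c * ⟪w, v⟫) : ℝ) : ℂ)
      = ∫ v : Euc d, ((rexp (-a * ‖v‖^2 + c * ⟪w, v⟫) : ℝ) : ℂ) := (integral_ofReal).symm
    _ = ∫ v : Euc d, Complex.exp (-(a:ℂ) * ‖v‖^2 + (c:ℂ) * (⟪w, v⟫:ℝ)) := by
        congr 1 with v; rw [ofReal_quad_eq, Complex.ofReal_exp]
    _ = ((π:ℂ) / a) ^ ((Module.finrank ℝ (Euc d) : ℂ) / 2) *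
          Complex.exp ((c:ℂ)^2 * (‖w‖:ℂ)^2 / (4 * a)) := h
    _ = (((π / a) ^ ((d:ℝ) / 2) * rexp (c^2 * ‖w‖^2 / (4*a)) : ℝ) : ℂ) := by
        rw [finrank_euclideanSpace_fin, Complex.ofReal_mul, Complex.ofReal_exp,
          Complex.ofReal_cpow (by positivity : (0:ℝ) ≤ π / a)]
        push_cast
        norm_num

lemma gauss_mgf {d : ℕ} {σ2 t : ℝ} (hσ : 0 < σ2) (ht : 2*t*σ2 < 1) (m : Euc d) :
    ∫⁻ y : Euc d, ENNReal.ofReal (rexp (t * ‖y‖^2) *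
        ((2*π*σ2) ^ (-(d:ℝ)/2) * rexp (-‖y - m‖^2 / (2*σ2))))
      = ENNReal.ofReal ((1 - 2*t*σ2) ^ (-(d:ℝ)/2) * rexp (t*‖m‖^2/(1-2*t*σ2))) := by
  have hσ' : σ2 ≠ 0 := ne_of_gt hσ
  have hpos : (0:ℝ) < 1 - 2*t*σ2 := by linarith
  have hne : (1:ℝ) - 2*t*σ2 ≠ 0 := ne_of_gt hpos
  set a : ℝ := 1/(2*σ2) - t with ha_def
  have ha : 0 < a := by
    have : t < 1/(2*σ2) := by
      rw [lt_div_iff₀ (by linarith : 0 < 2*σ2)]; linarith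
    simpa [ha_def] using sub_pos.mpr this
  have ha' : a ≠ 0 := ne_of_gt ha
  have h2σa : 2*σ2*a = 1 - 2*t*σ2 := by rw [ha_def]; field_simp
  have hC : (0:ℝ) ≤ (2*π*σ2) ^ (-(d:ℝ)/2) * rexp (-‖m‖^2/(2*σ2)) := by positivity
  have hpt : ∀ y : Euc d, rexp (t * ‖y‖^2) * ((2*π*σ2) ^ (-(d:ℝ)/2) * rexp (-‖y - m‖^2 / (2*σ2)))
      = ((2*π*σ2) ^ (-(d:ℝ)/2) * rexp (-‖m‖^2/(2*σ2))) * rexp (-a*‖y‖^2 + (1/σ2) * ⟪m, y⟫) := by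
    intro y
    have hexp_eq : t * ‖y‖^2 + (-‖y - m‖^2 / (2*σ2))
        = (-‖m‖^2/(2*σ2)) + (-a*‖y‖^2 + (1/σ2) * ⟪m, y⟫) := by
      have hns : ‖y - m‖^2 = ‖y‖^2 - 2 * ⟪y, m⟫ + ‖m‖^2 := norm_sub_sq_real y m
      rw [hns, real_inner_comm y m, ha_def]
      field_simp
      ring
    calc rexp (t * ‖y‖^2) * ((2*π*σ2) ^ (-(d:ℝ)/2) * rexp (-‖y - m‖^2 / (2*σ2)))
        = (2*π*σ2) ^ (-(d:ℝ)/2) * rexp (t * ‖y‖^2 + (-‖y - m‖^2 / (2*σ2))) := by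
          rw [Real.exp_add]; ring
      _ = (2*π*σ2) ^ (-(d:ℝ)/2) * (rexp (-‖m‖^2/(2*σ2)) * rexp (-a*‖y‖^2 + (1/σ2) * ⟪m, y⟫)) := by
          rw [hexp_eq, Real.exp_add]
      _ = _ := by ring
  simp_rw [hpt, ENNReal.ofReal_mul hC]
  rw [lintegral_const_mul' _ _ ENNReal.ofReal_ne_top,
    ← ofReal_integral_eq_lintegral_ofReal (integrable_rexp_quad ha (1/σ2) m)
      (ae_of_all _ fun y => (Real.exp_pos _).le),
    integral_rexp_quad ha (1/σ2) m, ← ENNReal.ofReal_mul hC]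
  congr 1
  have hnegd : (-(d:ℝ)/2) = -((d:ℝ)/2) := by ring
  have hrpow : (2*π*σ2) ^ (-(d:ℝ)/2) * (π/a) ^ ((d:ℝ)/2) = (1 - 2*t*σ2) ^ (-(d:ℝ)/2) := by
    rw [← h2σa, hnegd]
    rw [Real.rpow_neg (by positivity), Real.rpow_neg (by positivity)]
    rw [inv_mul_eq_div, ← Real.div_rpow (by positivity) (by positivity),
      ← Real.inv_rpow (by positivity)]
    congr 1
    field_simp
  have hexp : rexp (-‖m‖^2/(2*σ2)) * rexp ((1/σ2)^2 * ‖m‖^2 / (4*a)) =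
      rexp (t*‖m‖^2/(1-2*t*σ2)) := by
    rw [← Real.exp_add]
    congr 1
    rw [← h2σa, ha_def]
    rw [div_add_div _ _ (by positivity) (by positivity), div_eq_div_iff (by positivity) (by positivity)]
    field_simp
    ring
  calc (2*π*σ2) ^ (-(d:ℝ)/2) * rexp (-‖m‖^2/(2*σ2)) *
        ((π/a) ^ ((d:ℝ)/2) * rexp ((1/σ2)^2 * ‖m‖^2 / (4*a)))
      = ((2*π*σ2) ^ (-(d:ℝ)/2) * (π/a) ^ ((d:ℝ)/2)) *
        (rexp (-‖m‖^2/(2*σ2)) * rexp ((1/σ2)^2 * ‖m‖^2 / (4*a))) := by ring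
    _ = _ := by rw [hrpow, hexp]

lemma continuous_pcnPropDen {ρ : ℝ} {d : ℕ} (x : Euc d) :
    Continuous (fun y : Euc d => pcnPropDen ρ d x y) := by
  unfold pcnPropDen
  fun_prop

lemma pcnPropDen_nonneg {ρ : ℝ} (hρ : ρ < 1) {d : ℕ} (x y : Euc d) :
    0 ≤ pcnPropDen ρ d x y := by
  have h : (0:ℝ) < 1 - ρ := by linarith
  unfold pcnPropDen
  positivity

lemma chernoff {ρ : ℝ} (hρ : ρ ∈ Set.Ioo (0:ℝ) 1) {t : ℝ} (ht : 2*t*(1-ρ) < 1)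
    (d : ℕ) (x : Euc d) (s : ℝ) {S : Set (Euc d)} (hS : ∀ y ∈ S, 0 ≤ t * (‖y‖^2 - s)) :
    ∫⁻ y in S, ENNReal.ofReal (pcnPropDen ρ d x y)
      ≤ ENNReal.ofReal (rexp (-(t*s)) *
        ((1-2*t*(1-ρ))^(-(d:ℝ)/2) * rexp (t*(ρ*‖x‖^2)/(1-2*t*(1-ρ))))) := by
  have hσ : (0:ℝ) < 1 - ρ := by linarith [hρ.2]
  have step1 : ∫⁻ y in S, ENNReal.ofReal (pcnPropDen ρ d x y)
      ≤ ∫⁻ y, ENNReal.ofReal (rexp (-(t*s)) * (rexp (t*‖y‖^2) * pcnPropDen ρ d x y)) := by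
    refine le_trans (setLIntegral_mono ?_ ?_) (setLIntegral_le_lintegral _ _)
    · have hcont : Continuous fun y : Euc d =>
          rexp (-(t*s)) * (rexp (t*‖y‖^2) * pcnPropDen ρ d x y) := by
        unfold pcnPropDen; fun_prop
      exact hcont.measurable.ennreal_ofReal
    · intro y hy
      apply ENNReal.ofReal_le_ofReal
      have h1 : (1:ℝ) ≤ rexp (-(t*s)) * rexp (t*‖y‖^2) := by
        rw [← Real.exp_add]
        calc (1:ℝ) = rexp 0 := (Real.exp_zero).symm
        _ ≤ _ := Real.exp_le_exp.mpr (by have := hS y hy; nlinarith [hS y hy])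
      calc pcnPropDen ρ d x y = 1 * pcnPropDen ρ d x y := (one_mul _).symm
        _ ≤ (rexp (-(t*s)) * rexp (t*‖y‖^2)) * pcnPropDen ρ d x y :=
            mul_le_mul_of_nonneg_right h1 (pcnPropDen_nonneg hρ.2 x y)
        _ = _ := by ring
  refine le_trans step1 (le_of_eq ?_)
  have hnn : (0:ℝ) ≤ rexp (-(t*s)) := (Real.exp_pos _).le
  simp_rw [ENNReal.ofReal_mul hnn]
  rw [lintegral_const_mul' _ _ ENNReal.ofReal_ne_top]
  have hsm : ‖Real.sqrt ρ • x‖^2 = ρ * ‖x‖^2 := by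
    rw [norm_smul, Real.norm_eq_abs, abs_of_nonneg (Real.sqrt_nonneg ρ), mul_pow,
      Real.sq_sqrt hρ.1.le]
  have hmg := gauss_mgf (d := d) (σ2 := 1-ρ) (t := t) hσ ht (Real.sqrt ρ • x)
  rw [hsm] at hmg
  unfold pcnPropDen
  rw [hmg, ← ENNReal.ofReal_mul hnn]

set_option maxHeartbeats 1000000 in
/-- upper tail -/
lemma tail_bound_upper {ρ : ℝ} (hρ : ρ ∈ Set.Ioo (0:ℝ) 1) {ε M : ℝ} (hε : 0 < ε) (hM : 0 ≤ M) :
    ∃ c : ℝ, 0 < c ∧ ∀ (d : ℕ) (x : Euc d), ‖x‖^2 ≤ M * d →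
      ∫⁻ y in {y : Euc d | ρ*‖x‖^2 + (1-ρ)*d + ε*d ≤ ‖y‖^2},
          ENNReal.ofReal (pcnPropDen ρ d x y)
        ≤ ENNReal.ofReal (rexp (-(c * d))) := by
  obtain ⟨hρ0, hρ1⟩ := hρ
  have hσ : (0:ℝ) < 1 - ρ := by linarith
  obtain ⟨C, hCdef⟩ : ∃ C : ℝ, C = 4*(1-ρ)^2 + 4*ρ*M*(1-ρ) := ⟨_, rfl⟩
  have hCp : (0:ℝ) < C := by
    rw [hCdef]
    nlinarith [pow_pos hσ 2, mul_nonneg (mul_nonneg hρ0.le hM) hσ.le]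
  obtain ⟨t, htdef⟩ : ∃ t : ℝ, t = min (ε/(2*C)) (1/(4*(1-ρ))) := ⟨_, rfl⟩
  have ht0 : 0 < t := by
    rw [htdef]; exact lt_min (by positivity) (by positivity)
  have htq : 2*t*(1-ρ) ≤ 1/2 := by
    have h1 : t ≤ 1/(4*(1-ρ)) := htdef ▸ min_le_right _ _
    rw [le_div_iff₀ (by positivity)] at h1
    linarith
  have ht1 : 2*t*(1-ρ) < 1 := by linarith
  have htC : C*t ≤ ε/2 := by
    have h1 : t ≤ ε/(2*C) := htdef ▸ min_le_left _ _
    rw [le_div_iff₀ (by positivity)] at h1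
    linarith
  have hq0 : (0:ℝ) ≤ 2*t*(1-ρ) := by nlinarith
  refine ⟨t*ε/2, div_pos (mul_pos ht0 hε) two_pos, ?_⟩
  intro d x hx
  have hD : (0:ℝ) ≤ d := Nat.cast_nonneg d
  have hX : (0:ℝ) ≤ ‖x‖^2 := by positivity
  have hch := chernoff ⟨hρ0, hρ1⟩ ht1 d x (ρ*‖x‖^2 + (1-ρ)*d + ε*d)
      (S := {y : Euc d | ρ*‖x‖^2 + (1-ρ)*d + ε*d ≤ ‖y‖^2})
      (fun y hy => mul_nonneg ht0.le (sub_nonneg.mpr (by exact hy)))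
  refine hch.trans (ENNReal.ofReal_le_ofReal ?_)
  have h1q : (0:ℝ) < 1 - 2*t*(1-ρ) := by linarith
  have hlog : -Real.log (1 - 2*t*(1-ρ)) ≤ 2*t*(1-ρ) + 2*(2*t*(1-ρ))^2 := by
    have h2 : Real.log (1/(1 - 2*t*(1-ρ))) ≤ 1/(1 - 2*t*(1-ρ)) - 1 :=
      Real.log_le_sub_one_of_pos (by positivity)
    rw [one_div, Real.log_inv] at h2
    have hprod : (0:ℝ) ≤ (2*t*(1-ρ))^2 * (1 - 2*(2*t*(1-ρ))) :=
      mul_nonneg (sq_nonneg _) (by linarith)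
    have h3 : (1 - 2*t*(1-ρ))⁻¹ ≤ 1 + (2*t*(1-ρ) + 2*(2*t*(1-ρ))^2) := by
      rw [inv_eq_one_div, div_le_iff₀ h1q]
      nlinarith [hprod]
    linarith
  have hinv : 1/(1 - 2*t*(1-ρ)) ≤ 1 + 2*(2*t*(1-ρ)) := by
    rw [div_le_iff₀ h1q]
    nlinarith [mul_nonneg hq0 (by linarith : (0:ℝ) ≤ 1 - 2*(2*t*(1-ρ)))]
  have htρX : 0 ≤ t*(ρ*‖x‖^2) := mul_nonneg ht0.le (mul_nonneg hρ0.le hX)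
  have e3 : t*(ρ*‖x‖^2)/(1 - 2*t*(1-ρ))
      ≤ t*(ρ*‖x‖^2) + 2*(2*t*(1-ρ))*(t*(ρ*(M*(d:ℝ)))) := by
    have h5 : t*(ρ*‖x‖^2) ≤ t*(ρ*(M*(d:ℝ))) := by
      have h := mul_le_mul_of_nonneg_left hx (mul_nonneg ht0.le hρ0.le)
      nlinarith [h]
    calc t*(ρ*‖x‖^2)/(1 - 2*t*(1-ρ)) = t*(ρ*‖x‖^2) * (1/(1 - 2*t*(1-ρ))) := by ring
      _ ≤ t*(ρ*‖x‖^2) * (1 + 2*(2*t*(1-ρ))) := mul_le_mul_of_nonneg_left hinv htρX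
      _ = t*(ρ*‖x‖^2) + 2*(2*t*(1-ρ))*(t*(ρ*‖x‖^2)) := by ring
      _ ≤ t*(ρ*‖x‖^2) + 2*(2*t*(1-ρ))*(t*(ρ*(M*(d:ℝ)))) := by
          have h := mul_le_mul_of_nonneg_left h5 hq0
          nlinarith [h]
  have e2 : Real.log (1 - 2*t*(1-ρ)) * (-(d:ℝ)/2)
      ≤ ((d:ℝ)/2) * (2*t*(1-ρ) + 2*(2*t*(1-ρ))^2) := by
    have h := mul_le_mul_of_nonneg_left hlog (by positivity : (0:ℝ) ≤ (d:ℝ)/2)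
    linarith [h]
  have key : (d:ℝ) * (-(t*ε) + (4*(1-ρ)^2 + 4*ρ*M*(1-ρ))*t^2) ≤ -(t*ε/2*(d:ℝ)) := by
    have h6 : (4*(1-ρ)^2 + 4*ρ*M*(1-ρ))*t - ε/2 ≤ 0 := by rw [← hCdef]; linarith
    have h7 : 0 ≤ (d:ℝ)*t := mul_nonneg hD ht0.le
    have h8 := mul_nonpos_of_nonneg_of_nonpos h7 h6
    nlinarith [h8]
  have goal_ineq : -(t*(ρ*‖x‖^2 + (1-ρ)*(d:ℝ) + ε*(d:ℝ))) +
      (Real.log (1 - 2*t*(1-ρ)) * (-(d:ℝ)/2) + t*(ρ*‖x‖^2)/(1 - 2*t*(1-ρ)))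
      ≤ -(t*ε/2*(d:ℝ)) := by
    linarith [e2, e3, key]
  calc rexp (-(t*(ρ*‖x‖^2 + (1-ρ)*(d:ℝ) + ε*(d:ℝ)))) *
        ((1 - 2*t*(1-ρ))^(-(d:ℝ)/2) * rexp (t*(ρ*‖x‖^2)/(1 - 2*t*(1-ρ))))
      = rexp (-(t*(ρ*‖x‖^2 + (1-ρ)*(d:ℝ) + ε*(d:ℝ))) +
          (Real.log (1 - 2*t*(1-ρ)) * (-(d:ℝ)/2) + t*(ρ*‖x‖^2)/(1 - 2*t*(1-ρ)))) := by
        rw [Real.rpow_def_of_pos h1q, ← Real.exp_add, ← Real.exp_add]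
    _ ≤ rexp (-(t*ε/2*(d:ℝ))) := Real.exp_le_exp.mpr goal_ineq

set_option maxHeartbeats 1000000 in
/-- lower tail -/
lemma tail_bound_lower {ρ : ℝ} (hρ : ρ ∈ Set.Ioo (0:ℝ) 1) {ε M : ℝ} (hε : 0 < ε) (hM : 0 ≤ M) :
    ∃ c : ℝ, 0 < c ∧ ∀ (d : ℕ) (x : Euc d), ‖x‖^2 ≤ M * d →
      ∫⁻ y in {y : Euc d | ‖y‖^2 ≤ ρ*‖x‖^2 + (1-ρ)*d - ε*d},
          ENNReal.ofReal (pcnPropDen ρ d x y)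
        ≤ ENNReal.ofReal (rexp (-(c * d))) := by
  obtain ⟨hρ0, hρ1⟩ := hρ
  have hσ : (0:ℝ) < 1 - ρ := by linarith
  obtain ⟨C, hCdef⟩ : ∃ C : ℝ, C = 2*(1-ρ)^2 + 2*ρ*M*(1-ρ) := ⟨_, rfl⟩
  have hCp : (0:ℝ) < C := by
    rw [hCdef]
    nlinarith [pow_pos hσ 2, mul_nonneg (mul_nonneg hρ0.le hM) hσ.le]
  obtain ⟨τ, hτdef⟩ : ∃ τ : ℝ, τ = ε/(2*C) := ⟨_, rfl⟩
  have hτ0 : 0 < τ := by rw [hτdef]; positivity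
  have htC : C*τ ≤ ε/2 := by
    rw [hτdef]
    have h : C * (ε/(2*C)) = ε/2 := by field_simp
    linarith [h.le]
  have hu0 : (0:ℝ) ≤ 2*τ*(1-ρ) := by nlinarith
  have ht1 : 2*(-τ)*(1-ρ) < 1 := by nlinarith
  have h1u : (0:ℝ) < 1 - 2*(-τ)*(1-ρ) := by nlinarith
  refine ⟨τ*ε/2, div_pos (mul_pos hτ0 hε) two_pos, ?_⟩
  intro d x hx
  have hD : (0:ℝ) ≤ d := Nat.cast_nonneg d
  have hX : (0:ℝ) ≤ ‖x‖^2 := by positivity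
  have hch := chernoff ⟨hρ0, hρ1⟩ ht1 d x (ρ*‖x‖^2 + (1-ρ)*d - ε*d)
      (S := {y : Euc d | ‖y‖^2 ≤ ρ*‖x‖^2 + (1-ρ)*d - ε*d})
      (fun y hy => by
        have h : ‖y‖^2 ≤ ρ*‖x‖^2 + (1-ρ)*d - ε*d := hy
        nlinarith [mul_nonneg hτ0.le (sub_nonneg.mpr h)])
  refine hch.trans (ENNReal.ofReal_le_ofReal ?_)
  have hlog : Real.log (1 - 2*(-τ)*(1-ρ)) ≥ 2*τ*(1-ρ) - (2*τ*(1-ρ))^2 := by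
    have h2 : Real.log (1/(1 - 2*(-τ)*(1-ρ))) ≤ 1/(1 - 2*(-τ)*(1-ρ)) - 1 :=
      Real.log_le_sub_one_of_pos (by positivity)
    rw [one_div, Real.log_inv] at h2
    have h3 : (1 - 2*(-τ)*(1-ρ))⁻¹ ≤ 1 - (2*τ*(1-ρ) - (2*τ*(1-ρ))^2) := by
      rw [inv_eq_one_div, div_le_iff₀ h1u]
      nlinarith [pow_nonneg hu0 3, sq_nonneg (2*τ*(1-ρ))]
    linarith
  have hτρX : 0 ≤ τ*(ρ*‖x‖^2) := mul_nonneg hτ0.le (mul_nonneg hρ0.le hX)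
  have e3 : (-τ)*(ρ*‖x‖^2)/(1 - 2*(-τ)*(1-ρ))
      ≤ -(τ*(ρ*‖x‖^2)) + 2*τ*(1-ρ)*(τ*(ρ*(M*(d:ℝ)))) := by
    have hinv : 1 - 2*τ*(1-ρ) ≤ 1/(1 - 2*(-τ)*(1-ρ)) := by
      rw [le_div_iff₀ h1u]
      nlinarith [sq_nonneg (2*τ*(1-ρ))]
    have h5 : τ*(ρ*‖x‖^2) ≤ τ*(ρ*(M*(d:ℝ))) := by
      have h := mul_le_mul_of_nonneg_left hx (mul_nonneg hτ0.le hρ0.le)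
      nlinarith [h]
    have h6 := mul_le_mul_of_nonneg_left hinv hτρX
    -- h6 : τ*(ρ*‖x‖^2) * (1 - 2*τ*(1-ρ)) ≤ τ*(ρ*‖x‖^2) * (1/(1 - 2*(-τ)*(1-ρ)))
    have h7 : (-τ)*(ρ*‖x‖^2)/(1 - 2*(-τ)*(1-ρ))
        = -(τ*(ρ*‖x‖^2) * (1/(1 - 2*(-τ)*(1-ρ)))) := by ring
    have h8 := mul_le_mul_of_nonneg_left h5 (mul_nonneg hu0 hτ0.le)
    nlinarith [h6, h8]
  have e2 : Real.log (1 - 2*(-τ)*(1-ρ)) * (-(d:ℝ)/2)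
      ≤ ((d:ℝ)/2) * ((2*τ*(1-ρ))^2 - 2*τ*(1-ρ)) := by
    have h := mul_le_mul_of_nonneg_left hlog (by positivity : (0:ℝ) ≤ (d:ℝ)/2)
    nlinarith [h]
  have key : (d:ℝ) * (-(τ*ε) + (2*(1-ρ)^2 + 2*ρ*M*(1-ρ))*τ^2) ≤ -(τ*ε/2*(d:ℝ)) := by
    have h6 : (2*(1-ρ)^2 + 2*ρ*M*(1-ρ))*τ - ε/2 ≤ 0 := by rw [← hCdef]; linarith
    have h7 : 0 ≤ (d:ℝ)*τ := mul_nonneg hD hτ0.le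
    have h8 := mul_nonpos_of_nonneg_of_nonpos h7 h6
    nlinarith [h8]
  have goal_ineq : -((-τ)*(ρ*‖x‖^2 + (1-ρ)*(d:ℝ) - ε*(d:ℝ))) +
      (Real.log (1 - 2*(-τ)*(1-ρ)) * (-(d:ℝ)/2) + (-τ)*(ρ*‖x‖^2)/(1 - 2*(-τ)*(1-ρ)))
      ≤ -(τ*ε/2*(d:ℝ)) := by
    linarith [e2, e3, key]
  calc rexp (-((-τ)*(ρ*‖x‖^2 + (1-ρ)*(d:ℝ) - ε*(d:ℝ)))) *
        ((1 - 2*(-τ)*(1-ρ))^(-(d:ℝ)/2) * rexp ((-τ)*(ρ*‖x‖^2)/(1 - 2*(-τ)*(1-ρ))))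
      = rexp (-((-τ)*(ρ*‖x‖^2 + (1-ρ)*(d:ℝ) - ε*(d:ℝ))) +
          (Real.log (1 - 2*(-τ)*(1-ρ)) * (-(d:ℝ)/2) + (-τ)*(ρ*‖x‖^2)/(1 - 2*(-τ)*(1-ρ)))) := by
        rw [Real.rpow_def_of_pos h1u, ← Real.exp_add, ← Real.exp_add]
    _ ≤ rexp (-(τ*ε/2*(d:ℝ))) := Real.exp_le_exp.mpr goal_ineq


set_option maxHeartbeats 1000000 in
/-- two-sided tail bound -/
lemma tail_bound {ρ : ℝ} (hρ : ρ ∈ Set.Ioo (0:ℝ) 1) {ε M : ℝ} (hε : 0 < ε) (hM : 0 ≤ M) :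
    ∃ c : ℝ, 0 < c ∧ ∀ (d : ℕ) (x : Euc d), ‖x‖^2 ≤ M * d →
      ∫⁻ y in {y : Euc d | ε * d ≤ |‖y‖^2 - (ρ*‖x‖^2 + (1-ρ)*d)|},
          ENNReal.ofReal (pcnPropDen ρ d x y)
        ≤ ENNReal.ofReal (2 * rexp (-(c * d))) := by
  obtain ⟨c₁, hc₁, hU⟩ := tail_bound_upper hρ hε hM
  obtain ⟨c₂, hc₂, hL⟩ := tail_bound_lower hρ hε hM
  refine ⟨min c₁ c₂, lt_min hc₁ hc₂, ?_⟩
  intro d x hx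
  have hD : (0:ℝ) ≤ d := Nat.cast_nonneg d
  have hsub : {y : Euc d | ε * d ≤ |‖y‖^2 - (ρ*‖x‖^2 + (1-ρ)*d)|}
      ⊆ {y : Euc d | ρ*‖x‖^2 + (1-ρ)*d + ε*d ≤ ‖y‖^2}
        ∪ {y : Euc d | ‖y‖^2 ≤ ρ*‖x‖^2 + (1-ρ)*d - ε*d} := by
    intro y hy
    have hy' : ε*(d:ℝ) ≤ |‖y‖^2 - (ρ*‖x‖^2 + (1-ρ)*(d:ℝ))| := hy
    rcases le_abs.mp hy' with h | h
    · left; simp only [Set.mem_setOf_eq]; linarith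
    · right; simp only [Set.mem_setOf_eq]; linarith
  have h₁ : rexp (-(c₁ * d)) ≤ rexp (-(min c₁ c₂ * d)) :=
    Real.exp_le_exp.mpr (by nlinarith [min_le_left c₁ c₂])
  have h₂ : rexp (-(c₂ * d)) ≤ rexp (-(min c₁ c₂ * d)) :=
    Real.exp_le_exp.mpr (by nlinarith [min_le_right c₁ c₂])
  calc ∫⁻ y in {y : Euc d | ε * d ≤ |‖y‖^2 - (ρ*‖x‖^2 + (1-ρ)*d)|},
        ENNReal.ofReal (pcnPropDen ρ d x y)
      ≤ ∫⁻ y in ({y : Euc d | ρ*‖x‖^2 + (1-ρ)*d + ε*d ≤ ‖y‖^2}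
          ∪ {y : Euc d | ‖y‖^2 ≤ ρ*‖x‖^2 + (1-ρ)*d - ε*d}),
          ENNReal.ofReal (pcnPropDen ρ d x y) := lintegral_mono_set hsub
    _ ≤ (∫⁻ y in {y : Euc d | ρ*‖x‖^2 + (1-ρ)*d + ε*d ≤ ‖y‖^2},
          ENNReal.ofReal (pcnPropDen ρ d x y))
        + ∫⁻ y in {y : Euc d | ‖y‖^2 ≤ ρ*‖x‖^2 + (1-ρ)*d - ε*d},
          ENNReal.ofReal (pcnPropDen ρ d x y) := lintegral_union_le _ _ _
    _ ≤ ENNReal.ofReal (rexp (-(c₁ * d))) + ENNReal.ofReal (rexp (-(c₂ * d))) :=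
        add_le_add (hU d x hx) (hL d x hx)
    _ ≤ ENNReal.ofReal (rexp (-(min c₁ c₂ * d))) + ENNReal.ofReal (rexp (-(min c₁ c₂ * d))) :=
        add_le_add (ENNReal.ofReal_le_ofReal h₁) (ENNReal.ofReal_le_ofReal h₂)
    _ = ENNReal.ofReal (2 * rexp (-(min c₁ c₂ * d))) := by
        rw [← ENNReal.ofReal_add (Real.exp_pos _).le (Real.exp_pos _).le, two_mul]

lemma gauss_mass {d : ℕ} {z : ℝ} (hz : 0 < z) :
    ∫⁻ x : Euc d, ENNReal.ofReal ((2*π*z)^(-(d:ℝ)/2) * rexp (-‖x‖^2/(2*z))) = 1 := by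
  have h := gauss_mgf (d:=d) (σ2:=z) hz (t:=0) (by norm_num) (0 : Euc d)
  simpa using h

lemma measurable_rpow_aux (d : ℕ) :
    Measurable (fun z : ℝ => (2 * Real.pi * z) ^ (-(d : ℝ) / 2)) := by
  apply measurable_of_continuousOn_compl_singleton (0:ℝ)
  intro z hz
  have hz0 : z ≠ 0 := by simpa using hz
  have h2 : (2*Real.pi*z) ≠ 0 := by
    exact mul_ne_zero (by positivity) hz0
  exact ((Real.continuousAt_rpow_const _ _ (Or.inl h2)).comp
    ((continuous_const.mul continuous_id).continuousAt)).continuousWithinAt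

lemma measurable_gauss_pair (d : ℕ) :
    Measurable (fun p : Euc d × ℝ =>
      (2 * Real.pi * p.2) ^ (-(d : ℝ) / 2) * Real.exp (-‖p.1‖ ^ 2 / (2 * p.2))) := by
  apply Measurable.mul
  · exact (measurable_rpow_aux d).comp measurable_snd
  · exact ((((measurable_fst.norm.pow measurable_const).neg).div
      (measurable_const.mul measurable_snd))).exp

lemma measurable_mixDensity (Q : Measure ℝ) [IsProbabilityMeasure Q] (d : ℕ) :
    Measurable (mixDensity Q d) := by
  have h := (measurable_gauss_pair d).stronglyMeasurable.integral_prod_right'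
    (ν := Q.restrict (Set.Ioi (0:ℝ)))
  exact h.measurable

lemma mixDensity_nonneg (Q : Measure ℝ) (d : ℕ) (x : Euc d) : 0 ≤ mixDensity Q d x := by
  apply setIntegral_nonneg measurableSet_Ioi
  intro z hz
  have hz' : (0:ℝ) < z := hz
  positivity

lemma lintegral_mixDensity_le_one (Q : Measure ℝ) [IsProbabilityMeasure Q] (d : ℕ) :
    ∫⁻ x : Euc d, ENNReal.ofReal (mixDensity Q d x) ≤ 1 := by
  have step1 : ∀ x : Euc d, ENNReal.ofReal (mixDensity Q d x)
      ≤ ∫⁻ z in Set.Ioi (0:ℝ),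
          ENNReal.ofReal ((2 * Real.pi * z) ^ (-(d:ℝ)/2) * rexp (-‖x‖^2/(2*z))) ∂Q := by
    intro x
    calc ENNReal.ofReal (mixDensity Q d x) ≤ ‖mixDensity Q d x‖ₑ := Real.ofReal_le_enorm _
      _ ≤ ∫⁻ z in Set.Ioi (0:ℝ),
          ‖(2 * Real.pi * z) ^ (-(d:ℝ)/2) * rexp (-‖x‖^2/(2*z))‖ₑ ∂Q :=
        enorm_integral_le_lintegral_enorm _
      _ = _ := by
        refine setLIntegral_congr_fun measurableSet_Ioi (fun z hz => ?_)
        have hz' : (0:ℝ) < z := hz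
        rw [Real.enorm_eq_ofReal (by positivity)]
  calc ∫⁻ x : Euc d, ENNReal.ofReal (mixDensity Q d x)
      ≤ ∫⁻ x : Euc d, ∫⁻ z in Set.Ioi (0:ℝ),
          ENNReal.ofReal ((2 * Real.pi * z) ^ (-(d:ℝ)/2) * rexp (-‖x‖^2/(2*z))) ∂Q :=
        lintegral_mono step1
    _ = ∫⁻ z in Set.Ioi (0:ℝ), ∫⁻ x : Euc d,
          ENNReal.ofReal ((2 * Real.pi * z) ^ (-(d:ℝ)/2) * rexp (-‖x‖^2/(2*z))) ∂(volume) ∂Q :=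
        lintegral_lintegral_swap ((measurable_gauss_pair d).ennreal_ofReal.aemeasurable)
    _ = ∫⁻ z in Set.Ioi (0:ℝ), 1 ∂Q := by
        refine setLIntegral_congr_fun measurableSet_Ioi (fun z hz => ?_)
        exact gauss_mass (d:=d) hz
    _ = Q (Set.Ioi (0:ℝ)) := by rw [lintegral_one, Measure.restrict_apply_univ]
    _ ≤ 1 := prob_le_one

/-- detailed-balance flip identity for the pCN proposal density -/
lemma prop_den_flip {ρ : ℝ} (hρ : ρ ∈ Set.Ioo (0:ℝ) 1) {d : ℕ} (x y : Euc d) :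
    rexp (-‖x‖^2/2) / rexp (-‖y‖^2/2) * pcnPropDen ρ d x y = pcnPropDen ρ d y x := by
  have hσ : (0:ℝ) < 1 - ρ := by linarith [hρ.2]
  unfold pcnPropDen
  rw [← Real.exp_sub, mul_comm (rexp _), mul_assoc, ← Real.exp_add]
  congr 1
  have h1 : ‖y - Real.sqrt ρ • x‖^2
      = ‖y‖^2 - 2*(Real.sqrt ρ * ⟪y, x⟫) + ρ*‖x‖^2 := by
    rw [norm_sub_sq_real, real_inner_smul_right, norm_smul, Real.norm_eq_abs,
      abs_of_nonneg (Real.sqrt_nonneg ρ), mul_pow, Real.sq_sqrt hρ.1.le]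
  have h2 : ‖x - Real.sqrt ρ • y‖^2
      = ‖x‖^2 - 2*(Real.sqrt ρ * ⟪x, y⟫) + ρ*‖y‖^2 := by
    rw [norm_sub_sq_real, real_inner_smul_right, norm_smul, Real.norm_eq_abs,
      abs_of_nonneg (Real.sqrt_nonneg ρ), mul_pow, Real.sq_sqrt hρ.1.le]
  rw [h1, h2, real_inner_comm y x]
  field_simp
  ring

/-- the key identity: density times acceptance times proposal is a min. -/
lemma accept_min_identity {ρ : ℝ} (hρ : ρ ∈ Set.Ioo (0:ℝ) 1) {d : ℕ}
    (p : Euc d → ℝ) (x y : Euc d) (hpx : 0 ≤ p x) (hpy : 0 ≤ p y) :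
    p x * (pcnAccept d p x y * pcnPropDen ρ d x y)
      = min (p x * pcnPropDen ρ d x y) (p y * pcnPropDen ρ d y x) := by
  have hφxy := pcnPropDen_nonneg hρ.2 x y
  have hφyx := pcnPropDen_nonneg hρ.2 y x
  unfold pcnAccept
  rcases eq_or_lt_of_le hpx with h0 | hpos
  · rw [← h0]
    simp [min_eq_left (mul_nonneg hpy hφyx)]
  · have hD : 0 < p x * rexp (-‖y‖^2/2) := mul_pos hpos (Real.exp_pos _)
    have key : p x * ((p y * rexp (-‖x‖^2/2)) / (p x * rexp (-‖y‖^2/2))) * pcnPropDen ρ d x y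
        = p y * pcnPropDen ρ d y x := by
      rw [← prop_den_flip hρ x y]
      field_simp
    calc p x * (min 1 ((p y * rexp (-‖x‖^2/2)) / (p x * rexp (-‖y‖^2/2))) * pcnPropDen ρ d x y)
        = min (p x * pcnPropDen ρ d x y)
            (p x * ((p y * rexp (-‖x‖^2/2)) / (p x * rexp (-‖y‖^2/2))) * pcnPropDen ρ d x y) := by
          rw [min_mul_of_nonneg _ _ hφxy, mul_min_of_nonneg _ _ hpos.le]
          ring_nf
      _ = _ := by rw [key]

set_option maxHeartbeats 1000000 in
lemma main_bound {ρ : ℝ} (hρ : ρ ∈ Set.Ioo (0:ℝ) 1)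
    (Q : Measure ℝ) [IsProbabilityMeasure Q] (K : Set ℝ) (hKmeas : MeasurableSet K)
    {M ε δ c₁ c₂ : ℝ} (hM0 : 0 ≤ M) (hMK : ∀ u ∈ K, u ≤ M)
    (hδ0 : 0 < δ) (hδK : ∀ u ∈ K, δ ≤ |u - 1|) (hεdef : ε = (1-ρ^2)*δ/2)
    (hT₁ : ∀ (d : ℕ) (x : Euc d), ‖x‖^2 ≤ M * d →
      ∫⁻ y in {y : Euc d | ε * d ≤ |‖y‖^2 - (ρ*‖x‖^2 + (1-ρ)*d)|},
          ENNReal.ofReal (pcnPropDen ρ d x y)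
        ≤ ENNReal.ofReal (2 * rexp (-(c₁ * d))))
    (hT₂ : ∀ (d : ℕ) (x : Euc d), ‖x‖^2 ≤ (ρ*M + (1-ρ) + ε) * d →
      ∫⁻ y in {y : Euc d | ε * d ≤ |‖y‖^2 - (ρ*‖x‖^2 + (1-ρ)*d)|},
          ENNReal.ofReal (pcnPropDen ρ d x y)
        ≤ ENNReal.ofReal (2 * rexp (-(c₂ * d))))
    (d : ℕ) (hd : 1 ≤ d) :
    ∫⁻ x in {x : Euc d | ‖x‖ ^ 2 / (d : ℝ) ∈ K},
        pcnKernel ρ d (mixDensity Q d) x {x}ᶜ ∂(PdQ Q d)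
      ≤ ENNReal.ofReal (2 * rexp (-(c₁ * d))) + ENNReal.ofReal (2 * rexp (-(c₂ * d))) := by
  classical
  obtain ⟨hρ0, hρ1⟩ := hρ
  have hσ : (0:ℝ) < 1 - ρ := by linarith
  have hd0 : (0:ℝ) < d := by exact_mod_cast hd
  have hρ2 : ρ^2 < 1 := by nlinarith
  have hε : 0 < ε := by
    rw [hεdef]
    nlinarith [mul_pos (by linarith : (0:ℝ) < 1 - ρ^2) hδ0]
  -- abbreviations
  set pd := mixDensity Q d with hpd_def
  have hpd_meas : Measurable pd := measurable_mixDensity Q d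
  have hpd_nn : ∀ x, 0 ≤ pd x := mixDensity_nonneg Q d
  set A : Set (Euc d) := {x : Euc d | ‖x‖ ^ 2 / (d : ℝ) ∈ K} with hA_def
  have hAmeas : MeasurableSet A :=
    ((measurable_norm.pow_const 2).div_const _) hKmeas
  have hxA : ∀ x ∈ A, ‖x‖^2 ≤ M * d := by
    intro x hx
    have h1 : ‖x‖^2/(d:ℝ) ≤ M := hMK _ hx
    rw [div_le_iff₀ hd0] at h1
    linarith
  -- measurability of the integrand pair functions
  have hφ_cont : Continuous (fun p : Euc d × Euc d => pcnPropDen ρ d p.1 p.2) := by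
    unfold pcnPropDen; fun_prop
  have hφflip_cont : Continuous (fun p : Euc d × Euc d => pcnPropDen ρ d p.2 p.1) := by
    unfold pcnPropDen; fun_prop
  have hexp_meas : Measurable (fun x : Euc d => rexp (-‖x‖^2/2)) := by fun_prop
  have hacc_meas : Measurable (fun p : Euc d × Euc d =>
      ENNReal.ofReal (pcnAccept d pd p.1 p.2 * pcnPropDen ρ d p.1 p.2)) := by
    apply Measurable.ennreal_ofReal
    apply Measurable.mul _ hφ_cont.measurable
    unfold pcnAccept
    exact measurable_const.min
      (((( hpd_meas.comp measurable_snd).mul (hexp_meas.comp measurable_fst))).div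
        ((hpd_meas.comp measurable_fst).mul (hexp_meas.comp measurable_snd)))
  have hJmeas : Measurable (fun x : Euc d =>
      ∫⁻ y, ENNReal.ofReal (pcnAccept d pd x y * pcnPropDen ρ d x y)) :=
    hacc_meas.lintegral_prod_right'
  -- Step A: kernel pointwise bound
  have kb : ∀ x : Euc d, pcnKernel ρ d pd x {x}ᶜ
      ≤ ∫⁻ y, ENNReal.ofReal (pcnAccept d pd x y * pcnPropDen ρ d x y) := by
    intro x
    unfold pcnKernel
    rw [Measure.add_apply, Measure.smul_apply,
      Measure.dirac_apply' _ (measurableSet_singleton x).compl,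
      Set.indicator_of_notMem (by simp : x ∉ ({x}ᶜ : Set (Euc d))),
      withDensity_apply _ (measurableSet_singleton x).compl]
    simp only [smul_zero, add_zero]
    exact setLIntegral_le_lintegral _ _
  -- the Bad sets
  set Bad : Euc d → Set (Euc d) :=
    fun x => {y : Euc d | ε*(d:ℝ) ≤ |‖y‖^2 - (ρ*‖x‖^2 + (1-ρ)*(d:ℝ))|} with hBad_def
  have hBadmeas : ∀ x, MeasurableSet (Bad x) := by
    intro x
    exact measurableSet_le measurable_const
      (((measurable_norm.pow_const 2).sub_const _).abs)
  -- Step B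
  have step2 : ∫⁻ x in A, pcnKernel ρ d pd x {x}ᶜ ∂(PdQ Q d)
      ≤ ∫⁻ x in A, ENNReal.ofReal (pd x) *
          ∫⁻ y, ENNReal.ofReal (pcnAccept d pd x y * pcnPropDen ρ d x y) := by
    calc ∫⁻ x in A, pcnKernel ρ d pd x {x}ᶜ ∂(PdQ Q d)
        ≤ ∫⁻ x in A, (∫⁻ y, ENNReal.ofReal (pcnAccept d pd x y * pcnPropDen ρ d x y))
            ∂(PdQ Q d) := lintegral_mono kb
      _ = _ := by
          rw [PdQ, restrict_withDensity hAmeas,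
            lintegral_withDensity_eq_lintegral_mul _ hpd_meas.ennreal_ofReal hJmeas]
          rfl
  -- Step C : pointwise split
  have split : ∀ x ∈ A, ENNReal.ofReal (pd x) *
      (∫⁻ y, ENNReal.ofReal (pcnAccept d pd x y * pcnPropDen ρ d x y))
      ≤ (ENNReal.ofReal (pd x) * ∫⁻ y in Bad x, ENNReal.ofReal (pcnPropDen ρ d x y))
        + ∫⁻ y in (Bad x)ᶜ, ENNReal.ofReal (pd y * pcnPropDen ρ d y x) := by
    intro x _
    have h1 : ENNReal.ofReal (pd x) *
        (∫⁻ y, ENNReal.ofReal (pcnAccept d pd x y * pcnPropDen ρ d x y))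
        = ∫⁻ y, ENNReal.ofReal (min (pd x * pcnPropDen ρ d x y) (pd y * pcnPropDen ρ d y x)) := by
      rw [← lintegral_const_mul' _ _ ENNReal.ofReal_ne_top]
      congr 1 with y
      rw [← ENNReal.ofReal_mul (hpd_nn x), accept_min_identity ⟨hρ0, hρ1⟩ pd x y (hpd_nn x) (hpd_nn y)]
    rw [h1]
    have h2 : ∀ y : Euc d,
        ENNReal.ofReal (min (pd x * pcnPropDen ρ d x y) (pd y * pcnPropDen ρ d y x))
        ≤ (Bad x).indicator (fun y => ENNReal.ofReal (pd x * pcnPropDen ρ d x y)) y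
          + (Bad x)ᶜ.indicator (fun y => ENNReal.ofReal (pd y * pcnPropDen ρ d y x)) y := by
      intro y
      by_cases hy : y ∈ Bad x
      · rw [Set.indicator_of_mem hy, Set.indicator_of_notMem (Set.notMem_compl_iff.mpr hy),
          add_zero]
        exact ENNReal.ofReal_le_ofReal (min_le_left _ _)
      · rw [Set.indicator_of_notMem hy, Set.indicator_of_mem (Set.mem_compl hy), zero_add]
        exact ENNReal.ofReal_le_ofReal (min_le_right _ _)
    calc ∫⁻ y, ENNReal.ofReal (min (pd x * pcnPropDen ρ d x y) (pd y * pcnPropDen ρ d y x))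
        ≤ ∫⁻ y, ((Bad x).indicator (fun y => ENNReal.ofReal (pd x * pcnPropDen ρ d x y)) y
            + (Bad x)ᶜ.indicator (fun y => ENNReal.ofReal (pd y * pcnPropDen ρ d y x)) y) :=
          lintegral_mono h2
      _ = (∫⁻ y, (Bad x).indicator (fun y => ENNReal.ofReal (pd x * pcnPropDen ρ d x y)) y)
          + ∫⁻ y, (Bad x)ᶜ.indicator (fun y => ENNReal.ofReal (pd y * pcnPropDen ρ d y x)) y := by
          apply lintegral_add_left
          exact (Measurable.ennreal_ofReal (measurable_const.mul
            (hφ_cont.measurable.comp measurable_prodMk_left))).indicator (hBadmeas x)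
      _ = (ENNReal.ofReal (pd x) * ∫⁻ y in Bad x, ENNReal.ofReal (pcnPropDen ρ d x y))
          + ∫⁻ y in (Bad x)ᶜ, ENNReal.ofReal (pd y * pcnPropDen ρ d y x) := by
          rw [lintegral_indicator (hBadmeas x), lintegral_indicator (hBadmeas x).compl]
          congr 1
          rw [← lintegral_const_mul' _ _ ENNReal.ofReal_ne_top]
          congr 1 with y
          rw [← ENNReal.ofReal_mul (hpd_nn x)]
  -- T1
  have T1 : ∫⁻ x in A, (ENNReal.ofReal (pd x) * ∫⁻ y in Bad x, ENNReal.ofReal (pcnPropDen ρ d x y))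
      ≤ ENNReal.ofReal (2 * rexp (-(c₁ * d))) := by
    calc ∫⁻ x in A, (ENNReal.ofReal (pd x) * ∫⁻ y in Bad x, ENNReal.ofReal (pcnPropDen ρ d x y))
        ≤ ∫⁻ x in A, ENNReal.ofReal (pd x) * ENNReal.ofReal (2 * rexp (-(c₁ * d))) := by
          refine setLIntegral_mono' hAmeas (fun x hx => ?_)
          exact mul_le_mul_right (hT₁ d x (hxA x hx)) _
      _ = (∫⁻ x in A, ENNReal.ofReal (pd x)) * ENNReal.ofReal (2 * rexp (-(c₁ * d))) :=
          lintegral_mul_const' _ _ ENNReal.ofReal_ne_top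
      _ ≤ 1 * ENNReal.ofReal (2 * rexp (-(c₁ * d))) :=
          mul_le_mul_left
            (le_trans (setLIntegral_le_lintegral _ _) (lintegral_mixDensity_le_one Q d)) _
      _ = _ := one_mul _
  -- T2
  set E : Set (Euc d × Euc d) :=
    {p : Euc d × Euc d | p.1 ∈ A ∧ |‖p.2‖^2 - (ρ*‖p.1‖^2 + (1-ρ)*(d:ℝ))| < ε*(d:ℝ)} with hE_def
  have habs_meas : Measurable (fun p : Euc d × Euc d =>
      |‖p.2‖^2 - (ρ*‖p.1‖^2 + (1-ρ)*(d:ℝ))|) :=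
    ((((measurable_snd.norm.pow_const 2)).sub
      ((measurable_const.mul ((measurable_fst.norm.pow_const 2))).add measurable_const)).abs)
  have hEmeas : MeasurableSet E :=
    (measurable_fst hAmeas).inter (measurableSet_lt habs_meas measurable_const)
  have hGE_meas : Measurable (E.indicator
      (fun p : Euc d × Euc d => ENNReal.ofReal (pd p.2 * pcnPropDen ρ d p.2 p.1))) :=
    (((hpd_meas.comp measurable_snd).mul hφflip_cont.measurable).ennreal_ofReal).indicator hEmeas
  have T2 : ∫⁻ x in A, (∫⁻ y in (Bad x)ᶜ, ENNReal.ofReal (pd y * pcnPropDen ρ d y x))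
      ≤ ENNReal.ofReal (2 * rexp (-(c₂ * d))) := by
    have e1 : ∫⁻ x in A, (∫⁻ y in (Bad x)ᶜ, ENNReal.ofReal (pd y * pcnPropDen ρ d y x))
        = ∫⁻ x, ∫⁻ y, E.indicator
            (fun p => ENNReal.ofReal (pd p.2 * pcnPropDen ρ d p.2 p.1)) (x, y) := by
      rw [← lintegral_indicator hAmeas]
      apply lintegral_congr
      intro x
      by_cases hx : x ∈ A
      · rw [Set.indicator_of_mem hx, ← lintegral_indicator (hBadmeas x).compl]
        apply lintegral_congr
        intro y
        rw [Set.indicator_apply, Set.indicator_apply]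
        exact if_congr ⟨fun hy => ⟨hx, not_le.mp hy⟩, fun hm => not_le.mpr hm.2⟩ rfl rfl
      · rw [Set.indicator_of_notMem hx]
        symm
        have hz : ∀ y : Euc d, E.indicator
            (fun p => ENNReal.ofReal (pd p.2 * pcnPropDen ρ d p.2 p.1)) (x, y) = 0 :=
          fun y => Set.indicator_of_notMem (fun hmem => hx hmem.1) _
        rw [lintegral_congr hz, lintegral_zero]
    rw [e1, lintegral_lintegral_swap (f := fun x y => E.indicator
      (fun p => ENNReal.ofReal (pd p.2 * pcnPropDen ρ d p.2 p.1)) (x, y))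
      (by exact hGE_meas.aemeasurable)]
    have inner_bound : ∀ y : Euc d, (∫⁻ x, E.indicator
        (fun p => ENNReal.ofReal (pd p.2 * pcnPropDen ρ d p.2 p.1)) (x, y))
        ≤ ENNReal.ofReal (pd y) * ENNReal.ofReal (2 * rexp (-(c₂ * (d:ℝ)))) := by
      intro y
      have hEy : MeasurableSet {x : Euc d | (x, y) ∈ E} := measurable_prodMk_right hEmeas
      have hrw : ∀ x : Euc d, E.indicator
          (fun p => ENNReal.ofReal (pd p.2 * pcnPropDen ρ d p.2 p.1)) (x, y)
          = {x : Euc d | (x, y) ∈ E}.indicator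
              (fun x => ENNReal.ofReal (pd y * pcnPropDen ρ d y x)) x := by
        intro x
        rw [Set.indicator_apply, Set.indicator_apply]
        exact if_congr Iff.rfl rfl rfl
      rw [lintegral_congr hrw, lintegral_indicator hEy]
      calc ∫⁻ x in {x : Euc d | (x, y) ∈ E}, ENNReal.ofReal (pd y * pcnPropDen ρ d y x)
          = ENNReal.ofReal (pd y) *
            ∫⁻ x in {x : Euc d | (x, y) ∈ E}, ENNReal.ofReal (pcnPropDen ρ d y x) := by
            rw [← lintegral_const_mul' _ _ ENNReal.ofReal_ne_top]
            congr 1 with x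
            rw [← ENNReal.ofReal_mul (hpd_nn y)]
        _ ≤ _ := by
            apply mul_le_mul_right
            by_cases hy2 : ‖y‖^2 ≤ (ρ*M + (1-ρ) + ε) * d
            · refine le_trans (lintegral_mono_set ?_) (hT₂ d y hy2)
              intro x hxE
              obtain ⟨hx1, hx2⟩ := hxE
              have hXM := hxA x hx1
              have hu : δ ≤ |‖x‖^2/(d:ℝ) - 1| := hδK _ hx1
              have habs1 : δ*(d:ℝ) ≤ |‖x‖^2 - (d:ℝ)| := by
                have h3 : |‖x‖^2/(d:ℝ) - 1| * (d:ℝ) = |‖x‖^2 - (d:ℝ)| := by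
                  rw [← abs_of_pos hd0, ← abs_mul]
                  · congr 1
                    field_simp
                    rw [abs_of_pos hd0]; ring
                calc δ*(d:ℝ) ≤ |‖x‖^2/(d:ℝ) - 1| * (d:ℝ) := mul_le_mul_of_nonneg_right hu hd0.le
                  _ = _ := h3
              have hid : ‖x‖^2 - (ρ*‖y‖^2 + (1-ρ)*(d:ℝ))
                  = (1-ρ^2)*(‖x‖^2 - (d:ℝ)) - ρ*(‖y‖^2 - (ρ*‖x‖^2 + (1-ρ)*(d:ℝ))) := by ring
              have h4 := abs_sub_abs_le_abs_sub ((1-ρ^2)*(‖x‖^2 - (d:ℝ)))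
                (ρ*(‖y‖^2 - (ρ*‖x‖^2 + (1-ρ)*(d:ℝ))))
              rw [← hid, abs_mul, abs_mul, abs_of_pos (by nlinarith : (0:ℝ) < 1-ρ^2),
                abs_of_pos hρ0] at h4
              have h5 : (1-ρ^2)*(δ*(d:ℝ)) ≤ (1-ρ^2)*|‖x‖^2 - (d:ℝ)| :=
                mul_le_mul_of_nonneg_left habs1 (by nlinarith)
              have h6 : ρ*|‖y‖^2 - (ρ*‖x‖^2 + (1-ρ)*(d:ℝ))| ≤ ρ*(ε*(d:ℝ)) :=
                mul_le_mul_of_nonneg_left hx2.le hρ0.le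
              have h7 : ε*(d:ℝ) ≤ (1-ρ^2)*(δ*(d:ℝ)) - ρ*(ε*(d:ℝ)) := by
                rw [hεdef]
                nlinarith [mul_nonneg (mul_nonneg (by nlinarith : (0:ℝ) ≤ 1-ρ^2) hδ0.le) hd0.le,
                  mul_nonneg (mul_nonneg (mul_nonneg hρ0.le (by nlinarith : (0:ℝ) ≤ 1-ρ^2)) hδ0.le) hd0.le]
              show ε*(d:ℝ) ≤ |‖x‖^2 - (ρ*‖y‖^2 + (1-ρ)*(d:ℝ))|
              linarith
            · have hempty : {x : Euc d | (x, y) ∈ E} = ∅ := by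
                ext x
                simp only [Set.mem_empty_iff_false, iff_false]
                intro hxE
                obtain ⟨hx1, hx2⟩ := hxE
                have hXM := hxA x hx1
                have h8 := abs_lt.mp hx2
                push_neg at hy2
                nlinarith [h8.2, hy2]
              rw [hempty]
              simp
    calc ∫⁻ y, (∫⁻ x, E.indicator
          (fun p => ENNReal.ofReal (pd p.2 * pcnPropDen ρ d p.2 p.1)) (x, y))
        ≤ ∫⁻ y, ENNReal.ofReal (pd y) * ENNReal.ofReal (2*rexp (-(c₂*(d:ℝ)))) :=
          lintegral_mono inner_bound
      _ = (∫⁻ y, ENNReal.ofReal (pd y)) * ENNReal.ofReal (2*rexp (-(c₂*(d:ℝ)))) :=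
          lintegral_mul_const' _ _ ENNReal.ofReal_ne_top
      _ ≤ 1 * ENNReal.ofReal (2*rexp (-(c₂*(d:ℝ)))) :=
          mul_le_mul_left (lintegral_mixDensity_le_one Q d) _
      _ = _ := one_mul _
  -- measurability for the additive split
  have hBadPairMeas : MeasurableSet {p : Euc d × Euc d |
      ε*(d:ℝ) ≤ |‖p.2‖^2 - (ρ*‖p.1‖^2 + (1-ρ)*(d:ℝ))|} :=
    measurableSet_le measurable_const habs_meas
  have hterm1_meas : Measurable (fun x : Euc d =>
      ENNReal.ofReal (pd x) * ∫⁻ y in Bad x, ENNReal.ofReal (pcnPropDen ρ d x y)) := by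
    apply Measurable.mul hpd_meas.ennreal_ofReal
    have hcongr : (fun x : Euc d => ∫⁻ y in Bad x, ENNReal.ofReal (pcnPropDen ρ d x y))
        = fun x : Euc d => ∫⁻ y, ({p : Euc d × Euc d |
            ε*(d:ℝ) ≤ |‖p.2‖^2 - (ρ*‖p.1‖^2 + (1-ρ)*(d:ℝ))|}.indicator
            (fun p => ENNReal.ofReal (pcnPropDen ρ d p.1 p.2))) (x, y) := by
      funext x
      rw [← lintegral_indicator (hBadmeas x)]
      apply lintegral_congr
      intro y
      rw [Set.indicator_apply, Set.indicator_apply]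
      exact if_congr Iff.rfl rfl rfl
    rw [hcongr]
    exact (Measurable.indicator hφ_cont.measurable.ennreal_ofReal
      hBadPairMeas).lintegral_prod_right'
  -- final
  calc ∫⁻ x in A, pcnKernel ρ d pd x {x}ᶜ ∂(PdQ Q d)
      ≤ ∫⁻ x in A, ENNReal.ofReal (pd x) *
          ∫⁻ y, ENNReal.ofReal (pcnAccept d pd x y * pcnPropDen ρ d x y) := step2
    _ ≤ ∫⁻ x in A,
          ((ENNReal.ofReal (pd x) * ∫⁻ y in Bad x, ENNReal.ofReal (pcnPropDen ρ d x y))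
            + ∫⁻ y in (Bad x)ᶜ, ENNReal.ofReal (pd y * pcnPropDen ρ d y x)) :=
        setLIntegral_mono' hAmeas split
    _ = (∫⁻ x in A, ENNReal.ofReal (pd x) * ∫⁻ y in Bad x, ENNReal.ofReal (pcnPropDen ρ d x y))
        + ∫⁻ x in A, ∫⁻ y in (Bad x)ᶜ, ENNReal.ofReal (pd y * pcnPropDen ρ d y x) :=
        lintegral_add_left hterm1_meas _
    _ ≤ ENNReal.ofReal (2 * rexp (-(c₁ * d))) + ENNReal.ofReal (2 * rexp (-(c₂ * d))) :=
        add_le_add T1 T2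


/-- For the scale-mixture target `P_d = P_d(Q)` and the pCN kernel
`K_d`, for every `p ∈ ℕ` and every compact `K ⊂ (0,∞) ∖ {1}`,
`d^p ∫ 1{‖x‖²/d ∈ K} K_d(x, ℝ^d ∖ {x}) P_d(dx) → 0` as `d → ∞`. -/
theorem pcn_move_prob_superpolynomially_small (ρ : ℝ) (hρ : ρ ∈ Set.Ioo (0 : ℝ) 1)
    (Q : Measure ℝ) [IsProbabilityMeasure Q] (hQsupp : Q (Set.Iic 0) = 0)
    (p : ℕ) (K : Set ℝ) (hK : IsCompact K) (hKsub : K ⊆ Set.Ioi 0 \ {1}) :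
    Tendsto (fun d : ℕ =>
        ((d : ℝ≥0∞)) ^ p *
          ∫⁻ x in {x : Euc d | ‖x‖ ^ 2 / (d : ℝ) ∈ K},
            pcnKernel ρ d (mixDensity Q d) x {x}ᶜ ∂(PdQ Q d))
      atTop (𝓝 0) := by
  obtain ⟨M₀, hM₀⟩ := hK.bddAbove
  have hMK : ∀ u ∈ K, u ≤ max M₀ 0 := fun u hu => le_trans (hM₀ hu) (le_max_left _ _)
  have hM0 : (0:ℝ) ≤ max M₀ 0 := le_max_right _ _
  have h1K : (1:ℝ) ∉ K := fun h => (hKsub h).2 rfl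
  obtain ⟨δ, hδ0, hball⟩ := Metric.isOpen_iff.mp hK.isClosed.isOpen_compl 1 h1K
  have hδK : ∀ u ∈ K, δ ≤ |u - 1| := by
    intro u hu
    by_contra hcon
    push_neg at hcon
    exact hball (show u ∈ Metric.ball 1 δ by rw [Metric.mem_ball, Real.dist_eq]; exact hcon) hu
  have hρ2 : (0:ℝ) < 1 - ρ^2 := by nlinarith [hρ.1, hρ.2]
  have hε : 0 < (1-ρ^2)*δ/2 := div_pos (mul_pos hρ2 hδ0) two_pos
  obtain ⟨c₁, hc₁, hT₁⟩ := tail_bound hρ hε hM0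
  have hM'0 : (0:ℝ) ≤ ρ*(max M₀ 0) + (1-ρ) + (1-ρ^2)*δ/2 := by
    nlinarith [mul_nonneg hρ.1.le hM0, hρ.2]
  obtain ⟨c₂, hc₂, hT₂⟩ := tail_bound hρ hε hM'0
  have hc : 0 < min c₁ c₂ := lt_min hc₁ hc₂
  have main : ∀ d : ℕ, 1 ≤ d →
      ∫⁻ x in {x : Euc d | ‖x‖ ^ 2 / (d : ℝ) ∈ K},
          pcnKernel ρ d (mixDensity Q d) x {x}ᶜ ∂(PdQ Q d)
        ≤ ENNReal.ofReal (4 * rexp (-(min c₁ c₂ * d))) := by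
    intro d hd
    refine le_trans
      (main_bound hρ Q K hK.measurableSet hM0 hMK hδ0 hδK rfl hT₁ hT₂ d hd) ?_
    have hd0 : (0:ℝ) ≤ d := Nat.cast_nonneg d
    have h₁ : rexp (-(c₁ * d)) ≤ rexp (-(min c₁ c₂ * d)) :=
      Real.exp_le_exp.mpr (by nlinarith [min_le_left c₁ c₂])
    have h₂ : rexp (-(c₂ * d)) ≤ rexp (-(min c₁ c₂ * d)) :=
      Real.exp_le_exp.mpr (by nlinarith [min_le_right c₁ c₂])
    calc ENNReal.ofReal (2 * rexp (-(c₁ * d))) + ENNReal.ofReal (2 * rexp (-(c₂ * d)))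
        ≤ ENNReal.ofReal (2 * rexp (-(min c₁ c₂ * d)))
          + ENNReal.ofReal (2 * rexp (-(min c₁ c₂ * d))) :=
          add_le_add (ENNReal.ofReal_le_ofReal (by linarith))
            (ENNReal.ofReal_le_ofReal (by linarith))
      _ = ENNReal.ofReal (4 * rexp (-(min c₁ c₂ * d))) := by
          rw [← ENNReal.ofReal_add (by positivity) (by positivity)]
          ring_nf
  set c := min c₁ c₂ with hcdef
  have hg : Tendsto (fun d : ℕ => (d:ℝ)^p * (4 * rexp (-(c * d)))) atTop (𝓝 0) := by
    have h1 : Tendsto (fun x : ℝ => x^p * rexp (-x)) atTop (𝓝 0) :=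
      tendsto_pow_mul_exp_neg_atTop_nhds_zero p
    have h2 : Tendsto (fun d : ℕ => c * (d:ℝ)) atTop atTop :=
      Tendsto.const_mul_atTop hc tendsto_natCast_atTop_atTop
    have h3 := h1.comp h2
    have h4 := h3.const_mul (4/c^p)
    rw [mul_zero] at h4
    refine h4.congr (fun d => ?_)
    have hcp : c^p ≠ 0 := pow_ne_zero _ (ne_of_gt hc)
    simp only [Function.comp_apply]
    field_simp
    ring
  have hg' : Tendsto (fun d : ℕ =>
      ((d : ℝ≥0∞)) ^ p * ENNReal.ofReal (4 * rexp (-(c * d)))) atTop (𝓝 0) := by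
    have heq : ∀ d : ℕ, ((d : ℝ≥0∞)) ^ p * ENNReal.ofReal (4 * rexp (-(c * d)))
        = ENNReal.ofReal ((d:ℝ)^p * (4 * rexp (-(c * d)))) := by
      intro d
      rw [ENNReal.ofReal_mul (by positivity : (0:ℝ) ≤ (d:ℝ)^p),
        ENNReal.ofReal_pow (Nat.cast_nonneg d), ENNReal.ofReal_natCast]
    have h5 := ENNReal.tendsto_ofReal hg
    rw [ENNReal.ofReal_zero] at h5
    exact (h5.congr (fun d => (heq d).symm))
  apply tendsto_of_tendsto_of_tendsto_of_le_of_le' tendsto_const_nhds hg'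
  · exact Eventually.of_forall (fun d => zero_le)
  · filter_upwards [eventually_ge_atTop 1] with d hd
    exact mul_le_mul_right (main d hd) _
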